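/- Let X be a T₁ topological space that is not countably compact, and suppose that no uncountable cardinal μ ≤ d(X) carries a nonprincipal μ-complete ultrafilter (i.e., d(X) is less than the first measurable cardinal). Then the product space X^{2^{d(X)}} is e-separable. -/

import Mathlib

open Cardinal Set

universe u

/-- A subset `D` of a topological space is closed discrete iff it is closed and
its subspace topology is discrete. -/
def ClosedDiscrete {X : Type u} [TopologicalSpace X] (D : Set X) : Prop :=
  IsClosed D ∧ DiscreteTopology D

/-- A space is `e`-separable iff it has a dense set which is a countable union of
closed discrete sets. -/
def ESeparable (X : Type u) [TopologicalSpace X] : Prop :=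
  ∃ D : ℕ → Set X, (∀ n, ClosedDiscrete (D n)) ∧ Dense (⋃ n, D n)

/-- The density of a space: the least cardinality of a dense subset. -/
noncomputable def density (X : Type u) [TopologicalSpace X] : Cardinal.{u} :=
  sInf {c | ∃ D : Set X, Dense D ∧ #D = c}

/-- The extent of a space: the supremum of the cardinalities of closed discrete subsets. -/
noncomputable def extent (X : Type u) [TopologicalSpace X] : Cardinal.{u} :=
  sSup {c | ∃ D : Set X, ClosedDiscrete D ∧ #D = c}

/-- A space is countably compact iff every countable open cover has a finite subcover. -/
def CountablyCompact (X : Type u) [TopologicalSpace X] : Prop :=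
  ∀ 𝒰 : Set (Set X), 𝒰.Countable → (∀ U ∈ 𝒰, IsOpen U) → ⋃₀ 𝒰 = Set.univ →
    ∃ 𝒱 ⊆ 𝒰, 𝒱.Finite ∧ ⋃₀ 𝒱 = Set.univ

/- ### Auxiliary lemmas -/

lemma ESeparable.of_homeomorph {A B : Type u} [TopologicalSpace A] [TopologicalSpace B]
    (e : A ≃ₜ B) (h : ESeparable A) : ESeparable B := by
  obtain ⟨D, hD, hdense⟩ := h
  refine ⟨fun n => e '' D n, fun n => ⟨e.isClosed_image.2 (hD n).1, ?_⟩, ?_⟩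
  · have : DiscreteTopology (D n) := (hD n).2
    exact (Homeomorph.image e (D n)).symm.isEmbedding.discreteTopology
  · have : (⋃ n, e '' D n) = e '' ⋃ n, D n := (image_iUnion).symm
    rw [this, dense_iff_closure_eq, ← Homeomorph.image_closure,
      dense_iff_closure_eq.mp hdense, image_univ, Homeomorph.range_coe]

lemma meet2 {ι : Type u} {X : Type u} [TopologicalSpace X] {A : Set (ι → X)} {g : ι → X}
    (hg : g ∈ closure A) {i j : ι} {U V : Set X} (hU : IsOpen U) (hV : IsOpen V)
    (hgi : g i ∈ U) (hgj : g j ∈ V) : ∃ a ∈ A, a i ∈ U ∧ a j ∈ V := by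
  have hW : IsOpen ((fun f : ι → X => f i) ⁻¹' U ∩ (fun f : ι → X => f j) ⁻¹' V) :=
    ((continuous_apply i : Continuous fun f : ι → X => f i).isOpen_preimage U hU).inter ((continuous_apply j : Continuous fun f : ι → X => f j).isOpen_preimage V hV)
  obtain ⟨a, ⟨hai, haj⟩, haA⟩ := mem_closure_iff.mp hg _ hW ⟨hgi, hgj⟩
  exact ⟨a, haA, hai, haj⟩

lemma meet3 {ι : Type u} {X : Type u} [TopologicalSpace X] {A : Set (ι → X)} {g : ι → X}
    (hg : g ∈ closure A) {i j l : ι} {U V W : Set X} (hU : IsOpen U) (hV : IsOpen V)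
    (hW : IsOpen W) (hgi : g i ∈ U) (hgj : g j ∈ V) (hgl : g l ∈ W) :
    ∃ a ∈ A, a i ∈ U ∧ a j ∈ V ∧ a l ∈ W := by
  have hO : IsOpen ((fun f : ι → X => f i) ⁻¹' U ∩
      ((fun f : ι → X => f j) ⁻¹' V ∩ (fun f : ι → X => f l) ⁻¹' W)) :=
    ((continuous_apply i : Continuous fun f : ι → X => f i).isOpen_preimage U hU).inter
      (((continuous_apply j : Continuous fun f : ι → X => f j).isOpen_preimage V hV).inter
        ((continuous_apply l : Continuous fun f : ι → X => f l).isOpen_preimage W hW))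
  obtain ⟨a, ⟨hai, haj, hal⟩, haA⟩ := mem_closure_iff.mp hg _ hO ⟨hgi, hgj, hgl⟩
  exact ⟨a, haA, hai, haj, hal⟩

lemma closed_of_subset_range {X : Type u} [TopologicalSpace X] [T1Space X] (y : ℕ → X)
    (hfin : ∀ z : X, ∃ U, IsOpen U ∧ z ∈ U ∧ {k | y k ∈ U}.Finite)
    (G : Set X) (hG : G ⊆ Set.range y) : IsClosed G := by
  rw [← closure_subset_iff_isClosed]
  intro z hz
  by_contra hzG
  obtain ⟨U, hUo, hzU, hUfin⟩ := hfin z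
  have hfin2 : ((y '' {k | y k ∈ U}) \ {z}).Finite := ((hUfin.image y).subset diff_subset)
  have hWo : IsOpen (U \ (y '' {k | y k ∈ U} \ {z})) := hUo.sdiff hfin2.isClosed
  have hzW : z ∈ U \ (y '' {k | y k ∈ U} \ {z}) := ⟨hzU, fun h => h.2 rfl⟩
  obtain ⟨w, ⟨hwU, hwn⟩, hwG⟩ := mem_closure_iff.mp hz _ hWo hzW
  obtain ⟨k, rfl⟩ := hG hwG
  exact hwn ⟨mem_image_of_mem y hwU, fun h => hzG (h ▸ hwG)⟩

lemma nonempty_of_not_cc {X : Type u} [TopologicalSpace X] (h : ¬ CountablyCompact X) :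
    Nonempty X := by
  by_contra hne
  apply h
  intro 𝒰 _ _ _
  refine ⟨∅, empty_subset _, finite_empty, ?_⟩
  rw [sUnion_empty, eq_comm, eq_empty_iff_forall_notMem]
  exact fun x _ => hne ⟨x⟩

lemma exists_escape {X : Type u} [TopologicalSpace X] (h : ¬ CountablyCompact X) :
    ∃ y : ℕ → X, Function.Injective y ∧
      ∀ z : X, ∃ U, IsOpen U ∧ z ∈ U ∧ {k | y k ∈ U}.Finite := by
  have hX : Nonempty X := nonempty_of_not_cc h
  rw [CountablyCompact] at h
  push_neg at h
  obtain ⟨𝒰, hcnt, hop, hcov, hnofin⟩ := h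
  have h𝒰ne : 𝒰.Nonempty := by
    rcases isEmpty_or_nonempty X with hE | hN
    · exact hE.elim hX.some
    · by_contra hne
      rw [not_nonempty_iff_eq_empty] at hne
      rw [hne, sUnion_empty] at hcov
      exact (hN.elim fun x => by simpa [← hcov] using (mem_univ x))
  obtain ⟨u, hu⟩ := (Set.Countable.exists_eq_range hcnt h𝒰ne)
  set W : ℕ → Set X := fun n => ⋃ k ≤ n, u k with hW
  have hWo : ∀ n, IsOpen (W n) := by
    intro n
    refine isOpen_biUnion fun k _ => hop _ ?_
    rw [hu]; exact ⟨k, rfl⟩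
  have hWmono : ∀ {m n : ℕ}, m ≤ n → W m ⊆ W n := by
    intro m n hmn
    exact iUnion₂_subset fun k hk => subset_iUnion₂ (s := fun k (_ : k ≤ n) => u k) k
      (le_trans hk hmn)
  have hWcov : ∀ z : X, ∃ n, z ∈ W n := by
    intro z
    have : z ∈ ⋃₀ 𝒰 := hcov ▸ mem_univ z
    obtain ⟨t, ht, hzt⟩ := this
    rw [hu] at ht
    obtain ⟨k, rfl⟩ := ht
    exact ⟨k, mem_biUnion (le_refl k) hzt⟩
  have hWne : ∀ n, W n ≠ Set.univ := by
    intro n hWn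
    refine hnofin (u '' {k | k ≤ n}) ?_ ((finite_Iic n).image u) ?_
    · rw [hu]; exact image_subset_range u _
    · rw [sUnion_image, ← hWn]
      simp [hW]
  have hesc : ∀ n, ∃ x, x ∉ W n := by
    intro n
    have := hWne n
    rw [ne_comm, Ne, eq_comm, eq_univ_iff_forall] at this
    push_neg at this
    exact this
  choose x hx using hesc
  choose c hc using fun n => hWcov (x n)
  let φ : ℕ → ℕ := fun n => Nat.rec 0 (fun m p => max (p + 1) (c p)) n
  have hφsucc : ∀ n, φ (n + 1) = max (φ n + 1) (c (φ n)) := fun n => rfl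
  have hφmono : StrictMono φ := strictMono_nat_of_lt_succ (by
    intro n; rw [hφsucc]; exact lt_of_lt_of_le (Nat.lt_succ_self _) (le_max_left _ _))
  refine ⟨fun n => x (φ n), ?_, ?_⟩
  · have hkey : ∀ {n m : ℕ}, x (φ n) ∈ W (φ m) ↔ n < m := by
      intro n m
      constructor
      · intro hmem
        by_contra hnm
        push_neg at hnm
        exact hx (φ n) (hWmono (hφmono.le_iff_le.mpr hnm) hmem)
      · intro hnm
        have h1 : x (φ n) ∈ W (c (φ n)) := hc (φ n)
        have h2 : c (φ n) ≤ φ (n + 1) := by rw [hφsucc]; exact le_max_right _ _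
        exact hWmono (h2.trans (hφmono.monotone hnm)) h1
    intro n m hnm
    by_contra hne
    rcases Nat.lt_or_ge n m with h | h
    · have h1 := hkey.mpr h
      have h2 : x (φ m) ∈ W (φ m) := by simp only at hnm; rw [← hnm]; exact h1
      exact absurd (hkey.mp h2) (lt_irrefl m)
    · have hlt : m < n := lt_of_le_of_ne h (Ne.symm (fun hh => hne (hh ▸ rfl)))
      have h1 := hkey.mpr hlt
      have h2 : x (φ n) ∈ W (φ n) := by simp only at hnm; rw [hnm]; exact h1
      exact absurd (hkey.mp h2) (lt_irrefl n)
  · intro z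
    obtain ⟨n, hn⟩ := hWcov z
    refine ⟨W (φ n), hWo _, hWmono (hφmono.le_apply) hn, ?_⟩
    have : {k | x (φ k) ∈ W (φ n)} ⊆ {k | k < n} := by
      intro k hk
      by_contra hkn
      have hkn' : n ≤ k := not_lt.mp hkn
      exact hx (φ k) (hWmono (hφmono.monotone hkn') hk)
    exact (finite_Iio n).subset this

lemma hmp {X : Type u} [TopologicalSpace X] {S : Set X} (hS : Dense S) {s₀ : X} (hs₀ : s₀ ∈ S)
    (J : Type u) (e : J → (↥S → Bool)) (he : Function.Injective e) :
    ∃ (T : Type u) (h : T → (J → X)), Nonempty T ∧ #T ≤ max ℵ₀ #(↥S) ∧ DenseRange h := by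
  classical
  set κ' : Cardinal.{u} := max ℵ₀ #(↥S) with hκ'
  have hκ'inf : ℵ₀ ≤ κ' := le_max_left _ _
  refine ⟨Σ E : Finset ↥S, ((↥(E : Set ↥S) → Bool) → ↥S),
    fun t => fun j => ↑(t.2 (fun k => e j ↑k)), ⟨⟨∅, fun _ => ⟨s₀, hs₀⟩⟩⟩, ?_, ?_⟩
  · rw [mk_sigma]
    have hbound : ∀ E : Finset ↥S, #((↥(E : Set ↥S) → Bool) → ↥S) ≤ κ' := by
      intro E
      rw [← Cardinal.power_def]
      have h1 : #(↥(E : Set ↥S) → Bool) = (Fintype.card (↥(E : Set ↥S) → Bool) : Cardinal) :=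
        Cardinal.mk_fintype _
      rw [h1]
      calc #(↥S) ^ (Fintype.card (↥(E : Set ↥S) → Bool) : Cardinal)
          ≤ κ' ^ (Fintype.card (↥(E : Set ↥S) → Bool) : Cardinal) := by
            apply Cardinal.power_le_power_right (le_max_right _ _)
        _ = κ' ^ (Fintype.card (↥(E : Set ↥S) → Bool)) := by
            rw [Cardinal.power_natCast]
        _ ≤ κ' := Cardinal.power_nat_le hκ'inf
    calc (Cardinal.sum fun E : Finset ↥S => #((↥(E : Set ↥S) → Bool) → ↥S))
        ≤ Cardinal.sum (fun _ : Finset ↥S => κ') := Cardinal.sum_le_sum _ _ hbound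
      _ = #(Finset ↥S) * κ' := by rw [Cardinal.sum_const']
      _ ≤ κ' * κ' := by
          apply mul_le_mul_left
          rcases finite_or_infinite (↥S) with hf | hi
          · have := Fintype.ofFinite ↥S
            exact le_trans (le_of_lt (Cardinal.lt_aleph0_of_finite _)) hκ'inf
          · rw [Cardinal.mk_finset_of_infinite]; exact le_max_right _ _
      _ = κ' := Cardinal.mul_eq_self hκ'inf
  · rw [denseRange_iff_closure_range, ← dense_iff_closure_eq]
    rw [dense_iff_inter_open]
    intro U hU ⟨g, hg⟩
    obtain ⟨F, u, h1, h2⟩ := isOpen_pi_iff.mp hU g hg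
    have hwit : ∀ j j' : J, j ≠ j' → ∃ k, e j k ≠ e j' k := by
      intro j j' hjj'
      by_contra hc
      push_neg at hc
      exact hjj' (he (funext hc))
    set wit : J → J → ↥S := fun j j' =>
      if h : j ≠ j' then (hwit j j' h).choose else ⟨s₀, hs₀⟩ with hwitdef
    have hwitspec : ∀ j j', j ≠ j' → e j (wit j j') ≠ e j' (wit j j') := by
      intro j j' h
      rw [hwitdef]; simp only [dif_pos h]
      exact (hwit j j' h).choose_spec
    set E : Finset ↥S := F.biUnion (fun j => F.image (fun j' => wit j j')) with hE
    set r : J → (↥(E : Set ↥S) → Bool) := fun j k => e j ↑k with hr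
    have hrinj : ∀ j ∈ F, ∀ j' ∈ F, r j = r j' → j = j' := by
      intro j hj j' hj' hrr
      by_contra hne
      have hkE : wit j j' ∈ E := Finset.mem_biUnion.mpr ⟨j, hj, Finset.mem_image.mpr ⟨j', hj', rfl⟩⟩
      have := congrFun hrr ⟨wit j j', hkE⟩
      exact hwitspec j j' hne this
    have hpick : ∀ j : J, ∃ s : ↥S, (j ∈ F → ↑s ∈ u j) := by
      intro j
      by_cases hj : j ∈ F
      · obtain ⟨w, hw1, hw2⟩ := hS.inter_open_nonempty (u j) (h1 j hj).1 ⟨g j, (h1 j hj).2⟩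
        exact ⟨⟨w, hw2⟩, fun _ => hw1⟩
      · exact ⟨⟨s₀, hs₀⟩, fun h => absurd h hj⟩
    choose σ hσ using hpick
    set v : (↥(E : Set ↥S) → Bool) → ↥S := fun b =>
      if hb : ∃ j, j ∈ F ∧ r j = b then σ hb.choose else ⟨s₀, hs₀⟩ with hv
    refine ⟨fun j => ↑(v (r j)), ⟨?_, ⟨⟨E, v⟩, rfl⟩⟩⟩
    apply h2
    intro j hjF
    simp only
    have hb : ∃ j', j' ∈ F ∧ r j' = r j := ⟨j, hjF, rfl⟩
    rw [hv]; simp only [dif_pos hb]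
    have hspec := hb.choose_spec
    have : hb.choose = j := hrinj _ hspec.1 _ hjF hspec.2
    rw [this] at hspec ⊢
    exact hσ j hjF

lemma ulam {T : Type u} (𝒰 : Ultrafilter T) (hnp : ∀ t : T, 𝒰 ≠ pure t)
    (hcc : ∀ B : ℕ → Set T, (∀ m, B m ∈ 𝒰) → (⋂ m, B m) ∈ 𝒰) :
    ∃ μ : Cardinal.{u}, ℵ₀ < μ ∧ μ ≤ #T ∧ ∃ V : Ultrafilter μ.out, (∀ x, V ≠ pure x) ∧
      ∀ (ι : Type u) (s : ι → Set μ.out), #ι < μ → (∀ i, s i ∈ V) → (⋂ i, s i) ∈ V := by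
  classical
  have hsing : ∀ t : T, ({t} : Set T) ∉ 𝒰 := by
    intro t ht
    obtain ⟨x, hx, hfx⟩ := Ultrafilter.eq_pure_of_finite_mem (finite_singleton t) ht
    rw [mem_singleton_iff] at hx
    exact hnp t (hx ▸ hfx)
  set P : Set Cardinal.{u} :=
    {c | ∃ (ι : Type u) (N : ι → Set T), #ι = c ∧ (∀ i, N i ∉ 𝒰) ∧ (⋃ i, N i) ∈ 𝒰} with hP
  have hTP : #T ∈ P := by
    refine ⟨T, fun t => {t}, rfl, hsing, ?_⟩
    rw [iUnion_of_singleton]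
    exact Filter.univ_mem
  have hPne : P.Nonempty := ⟨_, hTP⟩
  have hPbig : ∀ c ∈ P, ℵ₀ < c := by
    rintro c ⟨ι, N, rfl, hN, hNU⟩
    by_contra hc
    push_neg at hc
    have hcnt : Countable ι := Cardinal.mk_le_aleph0_iff.mp hc
    rcases isEmpty_or_nonempty ι with hE | hN'
    · rw [iUnion_of_empty] at hNU
      exact Ultrafilter.empty_notMem hNU
    · obtain ⟨f, hf⟩ := exists_surjective_nat ι
      have hB : ∀ m : ℕ, (N (f m))ᶜ ∈ 𝒰 := fun m =>
        (Ultrafilter.compl_mem_iff_notMem).mpr (hN (f m))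
      have hI := hcc _ hB
      have heq : (⋂ m, (N (f m))ᶜ) = (⋃ i, N i)ᶜ := by
        rw [← compl_iUnion]
        exact congrArg compl (hf.iUnion_comp N)
      rw [heq] at hI
      have := Filter.inter_mem hNU hI
      rw [inter_compl_self] at this
      exact Ultrafilter.empty_notMem this
  set μ := sInf P with hμdef
  have hμP : μ ∈ P := csInf_mem hPne
  have hμbig : ℵ₀ < μ := hPbig μ hμP
  have hμle : μ ≤ #T := csInf_le' hTP
  obtain ⟨ι, N, hι, hNnull, hNU⟩ := hμP
  have hμne : Nonempty μ.out := by
    rw [← Cardinal.mk_ne_zero_iff, Cardinal.mk_out]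
    exact ne_of_gt (lt_trans Cardinal.aleph0_pos hμbig)
  have hEq : Nonempty (ι ≃ μ.out) := Cardinal.eq.mp (hι.trans (Cardinal.mk_out μ).symm)
  obtain ⟨E⟩ := hEq
  set N' : μ.out → Set T := fun b => N (E.symm b) with hN'def
  have hN'U : (⋃ b, N' b) = ⋃ i, N i := E.symm.surjective.iUnion_comp N
  have hN'null : ∀ b, N' b ∉ 𝒰 := fun b => hNnull _
  obtain ⟨b₀⟩ := hμne
  set N'' : μ.out → Set T := fun b => if b = b₀ then N' b ∪ (⋃ i, N' i)ᶜ else N' b with hN''def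
  have hN''null : ∀ b, N'' b ∉ 𝒰 := by
    intro b
    rw [hN''def]
    by_cases hb : b = b₀
    · simp only [hb, if_true]
      rw [Ultrafilter.union_mem_iff]
      rintro (h | h)
      · exact hN'null b₀ h
      · rw [Ultrafilter.compl_mem_iff_notMem, hN'U] at h
        exact h hNU
    · simp only [if_neg hb]
      exact hN'null b
  have hcov : ∀ t : T, ∃ b, t ∈ N'' b := by
    intro t
    by_cases ht : t ∈ ⋃ b, N' b
    · obtain ⟨b, hb⟩ := mem_iUnion.mp ht
      refine ⟨b, ?_⟩
      rw [hN''def]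
      by_cases hbb : b = b₀
      · simp only [hbb, if_true]; exact Or.inl (hbb ▸ hb)
      · simp only [if_neg hbb]; exact hb
    · exact ⟨b₀, by rw [hN''def]; simp only [if_true]; exact Or.inr ht⟩
  choose f hf using hcov
  set V : Ultrafilter μ.out := Ultrafilter.map f 𝒰 with hV
  refine ⟨μ, hμbig, hμle, V, ?_, ?_⟩
  · intro b hVb
    have hbV : ({b} : Set μ.out) ∈ V := by rw [hVb]; exact Filter.mem_pure.mpr rfl
    rw [hV, Ultrafilter.mem_map] at hbV
    have : f ⁻¹' {b} ⊆ N'' b := by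
      intro t ht
      rw [mem_preimage, mem_singleton_iff] at ht
      exact ht ▸ hf t
    exact hN''null b (Filter.mem_of_superset hbV this)
  · intro ι' s hcard hmem
    by_contra hnot
    have hcompl : (⋂ i, s i)ᶜ ∈ V := Ultrafilter.compl_mem_iff_notMem.mpr hnot
    rw [hV, Ultrafilter.mem_map] at hcompl
    have heq : f ⁻¹' (⋂ i, s i)ᶜ = ⋃ i, f ⁻¹' (s i)ᶜ := by
      rw [compl_iInter, preimage_iUnion]
    rw [heq] at hcompl
    have hMnull : ∀ i, f ⁻¹' (s i)ᶜ ∉ 𝒰 := by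
      intro i h
      rw [preimage_compl, Ultrafilter.compl_mem_iff_notMem] at h
      exact h (by rw [← Ultrafilter.mem_map]; exact hmem i)
    have : #ι' ∈ P := ⟨ι', fun i => f ⁻¹' (s i)ᶜ, rfl, hMnull, hcompl⟩
    exact absurd (csInf_le' this) (not_le.mpr hcard)

open Classical in
/-- Index used to encode subsets and sequences of subsets of `T` via the sequence `y`. -/
noncomputable def decodeIdx {T : Type u} : (Set T ⊕ (ℕ → Set T)) → T → ℕ
  | Sum.inl A, t => if t ∈ A then 1 else 0
  | Sum.inr B, t => if h : ∃ m, t ∉ B m then Nat.find h + 1 else 0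

lemma decodeIdx_inl_one {T : Type u} {A : Set T} {t : T} :
    decodeIdx (Sum.inl A) t = 1 ↔ t ∈ A := by
  by_cases h : t ∈ A <;> simp [decodeIdx, h]

lemma decodeIdx_inl_zero {T : Type u} {A : Set T} {t : T} :
    decodeIdx (Sum.inl A) t = 0 ↔ t ∉ A := by
  by_cases h : t ∈ A <;> simp [decodeIdx, h]

lemma decodeIdx_inl_cases {T : Type u} (A : Set T) (t : T) :
    decodeIdx (Sum.inl A) t = 0 ∨ decodeIdx (Sum.inl A) t = 1 := by
  by_cases h : t ∈ A <;> simp [decodeIdx, h]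

lemma decodeIdx_inr_zero {T : Type u} {B : ℕ → Set T} {t : T} :
    decodeIdx (Sum.inr B) t = 0 ↔ ∀ m, t ∈ B m := by
  classical
  simp only [decodeIdx]
  by_cases h : ∃ m, t ∉ B m
  · rw [dif_pos h]
    constructor
    · intro hh; exact absurd hh (Nat.succ_ne_zero _)
    · intro hall; exact absurd (hall _) (Nat.find_spec h)
  · rw [dif_neg h]
    push_neg at h
    exact ⟨fun _ => h, fun _ => rfl⟩

lemma decodeIdx_inr_succ {T : Type u} {B : ℕ → Set T} {t : T} {m : ℕ}
    (h : decodeIdx (Sum.inr B) t = m + 1) : t ∉ B m := by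
  classical
  simp only [decodeIdx] at h
  by_cases hex : ∃ m', t ∉ B m'
  · rw [dif_pos hex] at h
    have : Nat.find hex = m := Nat.succ_injective h
    exact this ▸ Nat.find_spec hex
  · rw [dif_neg hex] at h
    exact absurd h.symm (Nat.succ_ne_zero m)

/- ### Main theorem -/

theorem eSeparable_pow_two_pow_density_of_no_measurable {X : Type u} [TopologicalSpace X]
    [T1Space X] (hncc : ¬ CountablyCompact X)
    (hnm : ∀ μ : Cardinal.{u}, μ ≤ density X → ℵ₀ < μ →
      ¬ ∃ 𝒰 : Ultrafilter μ.out, (∀ x : μ.out, 𝒰 ≠ pure x) ∧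
        ∀ (ι : Type u) (s : ι → Set μ.out), #ι < μ → (∀ i, s i ∈ 𝒰) → ⋂ i, s i ∈ 𝒰) :
    ESeparable (((2 : Cardinal.{u}) ^ density X).out → X) := by
  classical
  have hX : Nonempty X := nonempty_of_not_cc hncc
  have hdset : density X ∈ {c | ∃ D : Set X, Dense D ∧ #D = c} :=
    csInf_mem ⟨#(univ : Set X), univ, dense_univ, rfl⟩
  obtain ⟨S, hSdense, hScard⟩ := hdset
  set I : Type u := ((2 : Cardinal.{u}) ^ density X).out with hIdef
  have hmkI : #I = 2 ^ density X := Cardinal.mk_out _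
  by_cases hfin : density X < ℵ₀
  -- degenerate case: finite density
  · have hSfin : S.Finite := by
      rw [← Cardinal.lt_aleph0_iff_set_finite, hScard]; exact hfin
    have hIfin : Finite I := by
      rw [← Cardinal.mk_lt_aleph0_iff, hmkI]
      exact Cardinal.power_lt_aleph0 (Cardinal.nat_lt_aleph0 2) hfin
    set Q : Set (I → X) := univ.pi (fun _ => S) with hQ
    have hQdense : Dense Q := by
      rw [dense_iff_closure_eq, hQ, closure_pi_set]
      rw [hSdense.closure_eq, pi_univ]
    have hQfin : Q.Finite := Set.Finite.pi (fun _ => hSfin)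
    refine ⟨fun _ => Q, fun n => ⟨hQfin.isClosed, ?_⟩, by rwa [iUnion_const]⟩
    have : Finite ↥Q := hQfin.to_subtype
    exact Finite.instDiscreteTopology
  -- main case
  · have hd : ℵ₀ ≤ density X := not_lt.mp hfin
    have h2d : ℵ₀ ≤ (2 : Cardinal.{u}) ^ density X :=
      hd.trans (Cardinal.cantor (density X)).le
    have hmkJ : #(I × ℕ) = 2 ^ density X := by
      have h1 : #(I × ℕ) = #I * ℵ₀ := by simp [Cardinal.mk_prod, Cardinal.mk_nat]
      rw [h1, hmkI]
      exact Cardinal.mul_aleph0_eq h2d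
    -- the escape sequence
    obtain ⟨y, hyinj, hyfin⟩ := exists_escape hncc
    have hyclosed : ∀ G ⊆ Set.range y, IsClosed G := fun G hG =>
      closed_of_subset_range y hyfin G hG
    set V : ℕ → Set X := fun k => (y '' {m | m ≠ k})ᶜ with hVdef
    have hVopen : ∀ k, IsOpen (V k) := fun k =>
      (hyclosed _ (by intro w hw; obtain ⟨m, _, rfl⟩ := hw; exact ⟨m, rfl⟩)).isOpen_compl
    have hVmem : ∀ k, y k ∈ V k := by
      intro k hk
      obtain ⟨m, hm, heq⟩ := hk
      exact hm (hyinj heq)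
    have hVonly : ∀ {m k : ℕ}, y m ∈ V k → m = k := by
      intro m k hm
      by_contra hne
      exact hm ⟨m, hne, rfl⟩
    -- the dense family from HMP
    obtain ⟨s₀, hs₀⟩ := hSdense.nonempty
    have harrow : #(↥S → Bool) = 2 ^ density X := by
      have h1 : #(↥S → Bool) = (2 : Cardinal.{u}) ^ #(↥S) := by
        simp [Cardinal.mk_arrow]
      rw [h1, hScard]
    obtain ⟨e⟩ := (Cardinal.le_def (I × ℕ) (↥S → Bool)).mp (le_of_eq (hmkJ.trans harrow.symm))
    obtain ⟨T, H, hTne, hTcard, hHdense⟩ := hmp hSdense hs₀ (I × ℕ) e e.injective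
    have hTd : #T ≤ density X := by
      rwa [hScard, max_eq_right hd] at hTcard
    -- the coding surjection
    have hCodes : #(Set T ⊕ (ℕ → Set T)) ≤ #I := by
      rw [Cardinal.mk_sum, Cardinal.lift_id, Cardinal.lift_id, hmkI]
      have h1 : #(Set T) ≤ 2 ^ density X := by
        rw [Cardinal.mk_set]
        exact Cardinal.power_le_power_left two_ne_zero hTd
      have h2 : #(ℕ → Set T) ≤ 2 ^ density X := by
        have h3 : #(ℕ → Set T) = ((2 : Cardinal.{u}) ^ #T) ^ (ℵ₀ : Cardinal.{u}) := by
          simp [Cardinal.mk_arrow, Cardinal.mk_set]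
        rw [h3, ← Cardinal.power_mul]
        apply Cardinal.power_le_power_left two_ne_zero
        calc #T * ℵ₀ ≤ density X * density X := mul_le_mul' hTd hd
          _ = density X := Cardinal.mul_eq_self hd
      exact (add_le_add h1 h2).trans (le_of_eq (Cardinal.add_eq_self h2d))
    have hCodesNe : Nonempty (Set T ⊕ (ℕ → Set T)) := ⟨Sum.inl ∅⟩
    obtain ⟨cf⟩ := (Cardinal.le_def _ _).mp hCodes
    set τ : I → (Set T ⊕ (ℕ → Set T)) := Function.invFun cf with hτdef
    have hτ : Function.Surjective τ := Function.invFun_surjective cf.injective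
    set zc : (Set T ⊕ (ℕ → Set T)) → I := fun c => (hτ c).choose with hzcdef
    have hzc : ∀ c, τ (zc c) = c := fun c => (hτ c).choose_spec
    -- the members
    set Gm : ℕ → T → (I × ℕ → X) :=
      fun n t p => if p.2 < n + 1 then H t p else y (decodeIdx (τ p.1) t) with hGmdef
    set Dn : ℕ → Set (I × ℕ → X) := fun n => Set.range (Gm n) with hDndef
    set ic : ℕ → (Set T ⊕ (ℕ → Set T)) → I × ℕ := fun n c => (zc c, n + 1) with hicdef
    have hGic : ∀ n t c, Gm n t (ic n c) = y (decodeIdx c t) := by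
      intro n t c
      rw [hGmdef, hicdef]
      simp only [if_neg (lt_irrefl (n + 1)), hzc]
    -- closedness and discreteness
    have hCD : ∀ n, ClosedDiscrete (Dn n) := by
      intro n
      constructor
      · -- closed
        rw [← closure_subset_iff_isClosed]
        intro gs hgs
        -- values at coding coordinates
        have hval : ∀ c, ∃ t₀ : T, gs (ic n c) = y (decodeIdx c t₀) := by
          intro c
          have h1 : gs (ic n c) ∈ closure ((fun f : I × ℕ → X => f (ic n c)) '' Dn n) :=
            mem_closure_image ((continuous_apply (ic n c)).continuousAt) hgs
          rw [hDndef] at h1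
          rw [← Set.range_comp] at h1
          have h2 : (fun f : I × ℕ → X => f (ic n c)) ∘ Gm n = fun t => y (decodeIdx c t) := by
            funext t
            exact hGic n t c
          rw [h2] at h1
          have h3 : IsClosed (Set.range fun t => y (decodeIdx c t)) := by
            apply hyclosed
            rintro w ⟨t, rfl⟩
            exact ⟨decodeIdx c t, rfl⟩
          rw [h3.closure_eq] at h1
          obtain ⟨t₀, ht₀⟩ := h1
          exact ⟨t₀, ht₀.symm⟩
        set uu : Set T → Prop := fun A => gs (ic n (Sum.inl A)) = y 1 with huudef
        -- dichotomy
        have hdich : ∀ A : Set T, uu A ∨ gs (ic n (Sum.inl A)) = y 0 := by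
          intro A
          obtain ⟨t₀, ht₀⟩ := hval (Sum.inl A)
          rcases decodeIdx_inl_cases A t₀ with h | h
          · right; rw [ht₀, h]
          · left; rw [huudef]; simp only; rw [ht₀, h]
        have hnuu : ∀ A : Set T, ¬ uu A → gs (ic n (Sum.inl A)) = y 0 := by
          intro A hA
          rcases hdich A with h | h
          · exact absurd h hA
          · exact h
        -- main meeting tool: for codes c, c' with prescribed values, find a member
        have hmeetc : ∀ (c c' : Set T ⊕ (ℕ → Set T)) (k k' : ℕ),
            gs (ic n c) = y k → gs (ic n c') = y k' →
            ∃ t, decodeIdx c t = k ∧ decodeIdx c' t = k' := by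
          intro c c' k k' hk hk'
          obtain ⟨a, haD, ha1, ha2⟩ := meet2 hgs (hVopen k) (hVopen k')
            (by rw [hk]; exact hVmem k) (by rw [hk']; exact hVmem k')
          obtain ⟨t, rfl⟩ := haD
          rw [hGic] at ha1 ha2
          exact ⟨t, hVonly ha1, hVonly ha2⟩
        have hmeetc3 : ∀ (c c' c'' : Set T ⊕ (ℕ → Set T)) (k k' k'' : ℕ),
            gs (ic n c) = y k → gs (ic n c') = y k' → gs (ic n c'') = y k'' →
            ∃ t, decodeIdx c t = k ∧ decodeIdx c' t = k' ∧ decodeIdx c'' t = k'' := by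
          intro c c' c'' k k' k'' hk hk' hk''
          obtain ⟨a, haD, ha1, ha2, ha3⟩ := meet3 hgs (hVopen k) (hVopen k') (hVopen k'')
            (by rw [hk]; exact hVmem k) (by rw [hk']; exact hVmem k') (by rw [hk'']; exact hVmem k'')
          obtain ⟨t, rfl⟩ := haD
          rw [hGic] at ha1 ha2 ha3
          exact ⟨t, hVonly ha1, hVonly ha2, hVonly ha3⟩
        -- filter properties
        have huniv : uu univ := by
          obtain ⟨t₀, ht₀⟩ := hval (Sum.inl univ)
          rw [huudef]; simp only; rw [ht₀]
          congr 1
          exact decodeIdx_inl_one.mpr (mem_univ t₀)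
        have hmono : ∀ {A B : Set T}, A ∈ {A | uu A} → A ⊆ B → B ∈ {A | uu A} := by
          intro A B hA hAB
          by_contra hB
          obtain ⟨t, ht1, ht2⟩ := hmeetc (Sum.inl A) (Sum.inl B) 1 0 hA (hnuu B hB)
          exact (decodeIdx_inl_zero.mp ht2) (hAB (decodeIdx_inl_one.mp ht1))
        have hinter : ∀ {A B : Set T}, A ∈ {A | uu A} → B ∈ {A | uu A} →
            A ∩ B ∈ {A | uu A} := by
          intro A B hA hB
          by_contra hAB
          obtain ⟨t, ht1, ht2, ht3⟩ := hmeetc3 (Sum.inl A) (Sum.inl B) (Sum.inl (A ∩ B)) 1 1 0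
            hA hB (hnuu _ hAB)
          exact (decodeIdx_inl_zero.mp ht3)
            ⟨decodeIdx_inl_one.mp ht1, decodeIdx_inl_one.mp ht2⟩
        set FF : Filter T := ⟨{A | uu A}, huniv, fun h1 h2 => hmono h1 h2,
          fun h1 h2 => hinter h1 h2⟩ with hFFdef
        have hcomplIff : ∀ A : Set T, Aᶜ ∉ FF ↔ A ∈ FF := by
          intro A
          constructor
          · intro hAc
            by_contra hA
            obtain ⟨t, ht1, ht2⟩ := hmeetc (Sum.inl A) (Sum.inl Aᶜ) 0 0 (hnuu A hA) (hnuu Aᶜ hAc)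
            exact (decodeIdx_inl_zero.mp ht2) (decodeIdx_inl_zero.mp ht1)
          · intro hA hAc
            obtain ⟨t, ht1, ht2⟩ := hmeetc (Sum.inl A) (Sum.inl Aᶜ) 1 1 hA hAc
            exact (decodeIdx_inl_one.mp ht2) (decodeIdx_inl_one.mp ht1)
        set UU : Ultrafilter T := Ultrafilter.ofComplNotMemIff FF hcomplIff with hUUdef
        have hmemUU : ∀ A : Set T, A ∈ UU ↔ uu A := fun A => Iff.rfl
        -- countable completeness
        have hccUU : ∀ B : ℕ → Set T, (∀ m, B m ∈ UU) → (⋂ m, B m) ∈ UU := by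
          intro B hB
          -- first: the value at the sequence-coordinate is y 0
          have hseq : gs (ic n (Sum.inr B)) = y 0 := by
            obtain ⟨t₀, ht₀⟩ := hval (Sum.inr B)
            rcases Nat.eq_zero_or_eq_succ_pred (decodeIdx (Sum.inr B) t₀) with h | h
            · rw [ht₀, h]
            · exfalso
              set m := (decodeIdx (Sum.inr B) t₀).pred with hm
              have hsucc : decodeIdx (Sum.inr B) t₀ = m + 1 := h
              have hgseq : gs (ic n (Sum.inr B)) = y (m + 1) := by rw [ht₀, hsucc]
              obtain ⟨t, ht1, ht2⟩ := hmeetc (Sum.inr B) (Sum.inl (B m)) (m + 1) 1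
                hgseq ((hmemUU _).mp (hB m))
              exact (decodeIdx_inr_succ ht1) (decodeIdx_inl_one.mp ht2)
          by_contra hIB
          obtain ⟨t, ht1, ht2⟩ := hmeetc (Sum.inr B) (Sum.inl (⋂ m, B m)) 0 0
            hseq (hnuu _ hIB)
          exact (decodeIdx_inl_zero.mp ht2) (mem_iInter.mpr (decodeIdx_inr_zero.mp ht1))
        -- principal or contradiction
        by_cases hex : ∃ t₀, uu {t₀}
        · obtain ⟨t₀, ht₀⟩ := hex
          have : gs = Gm n t₀ := by
            funext p
            have hcl : gs p ∈ closure {Gm n t₀ p} := by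
              rw [mem_closure_iff]
              intro o ho hpo
              obtain ⟨a, haD, ha1, ha2⟩ := meet2 hgs ho (hVopen 1) hpo
                (by rw [ht₀]; exact hVmem 1)
              obtain ⟨t, rfl⟩ := haD
              rw [hGic] at ha2
              have : t = t₀ := decodeIdx_inl_one.mp (hVonly ha2)
              rw [this] at ha1
              exact ⟨Gm n t₀ p, ha1, rfl⟩
            rwa [closure_singleton, mem_singleton_iff] at hcl
          rw [this]
          exact ⟨t₀, rfl⟩
        · exfalso
          push_neg at hex
          have hnp : ∀ t : T, UU ≠ pure t := by
            intro t ht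
            have : ({t} : Set T) ∈ UU := by rw [ht]; exact Filter.mem_pure.mpr rfl
            exact hex t ((hmemUU _).mp this)
          obtain ⟨μ, hμ1, hμ2, VV, hVV1, hVV2⟩ := ulam UU hnp hccUU
          exact hnm μ (hμ2.trans hTd) hμ1 ⟨VV, hVV1, hVV2⟩
      · -- discrete
        rw [discreteTopology_iff_isOpen_singleton]
        rintro ⟨w, hw⟩
        obtain ⟨t, rfl⟩ := hw
        have hopen : IsOpen {b : ↥(Dn n) | (b : I × ℕ → X) (ic n (Sum.inl {t})) ∈ V 1} := by
          apply IsOpen.preimage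
          · exact (continuous_apply (ic n (Sum.inl {t}))).comp continuous_subtype_val
          · exact hVopen 1
        convert hopen using 1
        ext ⟨w', hw'⟩
        simp only [mem_singleton_iff, mem_setOf_eq, Subtype.mk.injEq]
        constructor
        · intro hww
          rw [show w' = Gm n t from congrArg Subtype.val hww, hGic]
          have : decodeIdx (Sum.inl ({t} : Set T)) t = 1 := decodeIdx_inl_one.mpr rfl
          rw [this]
          exact hVmem 1
        · intro hmem
          obtain ⟨t', rfl⟩ := hw'
          rw [hGic] at hmem
          have := decodeIdx_inl_one.mp (hVonly hmem)
          rw [this]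
    -- density
    have hdense : Dense (⋃ n, Dn n) := by
      rw [dense_iff_inter_open]
      intro U hU ⟨g, hg⟩
      obtain ⟨F, uo, h1, h2⟩ := isOpen_pi_iff.mp hU g hg
      set n : ℕ := F.sup Prod.snd with hn
      have hO : IsOpen ((F : Set (I × ℕ)).pi uo) :=
        isOpen_set_pi F.finite_toSet (fun p hp => (h1 p hp).1)
      have hOne : ((F : Set (I × ℕ)).pi uo).Nonempty := ⟨g, fun p hp => (h1 p hp).2⟩
      obtain ⟨t, ht⟩ := hHdense.exists_mem_open hO hOne
      refine ⟨Gm n t, ?_, mem_iUnion.mpr ⟨n, ⟨t, rfl⟩⟩⟩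
      apply h2
      intro p hp
      have hpn : p.2 < n + 1 := Nat.lt_succ_of_le (Finset.le_sup hp)
      rw [hGmdef]
      simp only [if_pos hpn]
      exact ht p hp
    -- transfer along the homeomorphism
    have hES : ESeparable (I × ℕ → X) := ⟨Dn, hCD, hdense⟩
    obtain ⟨ψ⟩ := Cardinal.eq.mp (hmkI.trans hmkJ.symm)
    exact hES.of_homeomorph (Homeomorph.piCongrLeft (Y := fun _ => X) ψ).symm
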